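/- In a polynomial algebra (P,⋆,≺) of solvable type over a field, the maps ρ_μ and coefficients r_{μν} arising from the commutation relations x^μ ⋆ r = ρ_μ(r)x^μ + (lower terms) and x^μ ⋆ x^ν = r_{μν} x^{μ+ν} + (lower terms) satisfy ρ_μ(ρ_ν(r))·r_{μν} = r_{μν}·ρ_{μ+ν}(r) and ρ_μ(r_{νλ})·r_{μ,ν+λ} = r_{μν}·r_{μ+ν,λ} for all multi indices μ,ν,λ and all ring elements r; moreover each ρ_μ is a ring endomorphism. -/

import Mathlib

/-- Polynomials in `n` variables over `R`, represented by their coefficient families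
indexed by multi indices. -/
abbrev SPoly (R : Type) [CommRing R] (n : ℕ) := (Fin n → ℕ) →₀ R

/-- The leading exponent of a polynomial with respect to a term order (the maximal
element of its support; `0` for the zero polynomial). -/
noncomputable def lexp {R : Type} [CommRing R] {n : ℕ} (ord : LinearOrder (Fin n → ℕ))
    (f : SPoly R n) : Fin n → ℕ :=
  WithBot.unbotD 0 (@Finset.max _ ord f.support)

/-- A polynomial algebra of solvable type `(P, ⋆, ≺)`: the `R`-module `R[x₁,…,xₙ]`
equipped with an associative unital multiplication `⋆` such that `r ⋆ f = r • f` for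
scalars, and with respect to a term order `≺` (a monoid order) the leading exponent of
`x^μ ⋆ x^ν` is `μ + ν` and of `x^μ ⋆ r` (for `r ≠ 0`) is `μ`. -/
structure SolvMul (R : Type) [CommRing R] (n : ℕ) (ord : LinearOrder (Fin n → ℕ)) where
  star : SPoly R n → SPoly R n → SPoly R n
  zero_min : ∀ μ : Fin n → ℕ, ord.le 0 μ
  add_compat : ∀ μ ν σ : Fin n → ℕ, ord.lt μ ν → ord.lt (μ + σ) (ν + σ)
  star_assoc : ∀ f g h : SPoly R n, star (star f g) h = star f (star g h)
  star_add : ∀ f g h : SPoly R n, star f (g + h) = star f g + star f h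
  add_star : ∀ f g h : SPoly R n, star (f + g) h = star f h + star g h
  one_star : ∀ f : SPoly R n, star (Finsupp.single 0 1) f = f
  star_one : ∀ f : SPoly R n, star f (Finsupp.single 0 1) = f
  scalar_star : ∀ (r : R) (f : SPoly R n), star (Finsupp.single 0 r) f = r • f
  mono_mono : ∀ μ ν : Fin n → ℕ,
    star (Finsupp.single μ 1) (Finsupp.single ν 1) ≠ 0 ∧
      lexp ord (star (Finsupp.single μ 1) (Finsupp.single ν 1)) = μ + ν
  mono_scalar : ∀ (μ : Fin n → ℕ) (r : R), r ≠ 0 →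
    star (Finsupp.single μ 1) (Finsupp.single 0 r) ≠ 0 ∧
      lexp ord (star (Finsupp.single μ 1) (Finsupp.single 0 r)) = μ

namespace SolvAux

variable {K : Type} [Field K] {n : ℕ} {ord : LinearOrder (Fin n → ℕ)}
variable (A : SolvMul K n ord)

-- order helpers
lemma ole_of_lt {a b : Fin n → ℕ} (h : ord.lt a b) : ord.le a b :=
  ((ord.lt_iff_le_not_ge a b).mp h).1

lemma olt_irrefl {a : Fin n → ℕ} (h : ord.lt a a) : False :=
  ((ord.lt_iff_le_not_ge a a).mp h).2 (ord.le_refl a)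

lemma olt_of_le_ne {a b : Fin n → ℕ} (h : ord.le a b) (hne : a ≠ b) : ord.lt a b :=
  (ord.lt_iff_le_not_ge a b).mpr ⟨h, fun h' => hne (ord.le_antisymm _ _ h h')⟩

lemma olt_of_le_of_lt {a b c : Fin n → ℕ} (h1 : ord.le a b) (h2 : ord.lt b c) : ord.lt a c := by
  obtain ⟨hbc, hn⟩ := (ord.lt_iff_le_not_ge b c).mp h2
  exact (ord.lt_iff_le_not_ge a c).mpr
    ⟨ord.le_trans _ _ _ h1 hbc, fun hca => hn (ord.le_trans _ _ _ hca h1)⟩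

lemma olt_of_lt_of_le {a b c : Fin n → ℕ} (h1 : ord.lt a b) (h2 : ord.le b c) : ord.lt a c := by
  obtain ⟨hab, hn⟩ := (ord.lt_iff_le_not_ge a b).mp h1
  exact (ord.lt_iff_le_not_ge a c).mpr
    ⟨ord.le_trans _ _ _ hab h2, fun hca => hn (ord.le_trans _ _ _ h2 hca)⟩

include A in
lemma leR {a b : Fin n → ℕ} (τ : Fin n → ℕ) (h : ord.le a b) :
    ord.le (a + τ) (b + τ) := by
  by_cases he : a = b
  · subst he; exact ord.le_refl _
  · exact ole_of_lt (A.add_compat _ _ _ (olt_of_le_ne h he))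

include A in
lemma oltL {a b : Fin n → ℕ} (τ : Fin n → ℕ) (h : ord.lt a b) :
    ord.lt (τ + a) (τ + b) := by
  rw [add_comm τ a, add_comm τ b]; exact A.add_compat _ _ _ h

-- lexp helper
lemma mem_le_lexp {f : SPoly K n} {σ : Fin n → ℕ} (h : σ ∈ f.support) :
    ord.le σ (lexp ord f) := by
  obtain ⟨m, hm⟩ := @Finset.max_of_mem _ ord _ _ h
  have h2 := @Finset.le_max _ ord _ _ h
  rw [hm] at h2
  rw [lexp, hm, WithBot.unbotD_coe]
  exact (@WithBot.coe_le_coe _ _ _ ord.toLE).mp h2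

-- basic star facts
lemma star_zero (f : SPoly K n) : A.star f 0 = 0 := by
  have h := A.star_add f 0 0
  simpa using h.symm

lemma zero_star (f : SPoly K n) : A.star 0 f = 0 := by
  have h := A.add_star 0 0 f
  simpa using h.symm

lemma single_eq_scalar_star (μ : Fin n → ℕ) (c : K) :
    (Finsupp.single μ c : SPoly K n)
      = A.star (Finsupp.single 0 c) (Finsupp.single μ 1) := by
  rw [A.scalar_star, Finsupp.smul_single, smul_eq_mul, mul_one]

lemma single_star (μ : Fin n → ℕ) (c : K) (f : SPoly K n) :
    A.star (Finsupp.single μ c) f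
      = c • A.star (Finsupp.single μ 1) f := by
  rw [single_eq_scalar_star A, A.star_assoc, A.scalar_star]

-- bounded support predicates
def bd (f : SPoly K n) (κ : Fin n → ℕ) : Prop := ∀ σ ∈ f.support, ord.le σ κ
def sbd (f : SPoly K n) (κ : Fin n → ℕ) : Prop := ∀ σ ∈ f.support, ord.lt σ κ

lemma bd_single (μ : Fin n → ℕ) (c : K) : bd (ord := ord) (Finsupp.single μ c) μ := by
  intro σ hσ
  have := Finsupp.support_single_subset hσ
  simp only [Finset.mem_singleton] at this
  subst this; exact ord.le_refl _

lemma bd_zero (κ : Fin n → ℕ) : bd (ord := ord) (0 : SPoly K n) κ := by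
  intro σ hσ; simp at hσ

lemma bd_smul {f : SPoly K n} {κ : Fin n → ℕ} (c : K) (h : bd (ord := ord) f κ) :
    bd (ord := ord) (c • f) κ := by
  intro σ hσ
  exact h σ (Finsupp.support_smul hσ)

lemma bd_add {f g : SPoly K n} {κ : Fin n → ℕ} (hf : bd (ord := ord) f κ)
    (hg : bd (ord := ord) g κ) : bd (ord := ord) (f + g) κ := by
  intro σ hσ
  rcases Finset.mem_union.mp (Finsupp.support_add hσ) with h | h
  exacts [hf σ h, hg σ h]

lemma sbd_add {f g : SPoly K n} {κ : Fin n → ℕ} (hf : sbd (ord := ord) f κ)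
    (hg : sbd (ord := ord) g κ) : sbd (ord := ord) (f + g) κ := by
  intro σ hσ
  rcases Finset.mem_union.mp (Finsupp.support_add hσ) with h | h
  exacts [hf σ h, hg σ h]

lemma sbd_smul {f : SPoly K n} {κ : Fin n → ℕ} (c : K) (h : sbd (ord := ord) f κ) :
    sbd (ord := ord) (c • f) κ := fun σ hσ => h σ (Finsupp.support_smul hσ)

lemma bd_of_le {f : SPoly K n} {κ κ' : Fin n → ℕ} (h : bd (ord := ord) f κ)
    (hle : ord.le κ κ') : bd (ord := ord) f κ' :=
  fun σ hσ => ord.le_trans _ _ _ (h σ hσ) hle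

lemma sbd_coeff {f : SPoly K n} {κ : Fin n → ℕ} (h : sbd (ord := ord) f κ) : f κ = 0 := by
  by_contra hne
  exact olt_irrefl (h κ (Finsupp.mem_support_iff.mpr hne))

-- bound for X^σ ⋆ r
lemma bd_mono_scalar (σ : Fin n → ℕ) (c : K) :
    bd (ord := ord) (A.star (Finsupp.single σ 1) (Finsupp.single 0 c)) σ := by
  by_cases hc : c = 0
  · subst hc
    rw [Finsupp.single_zero, star_zero]
    exact bd_zero _
  · intro τ hτ
    have := mem_le_lexp (ord := ord) hτ
    rwa [(A.mono_scalar σ c hc).2] at this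

lemma bd_mono_mono (σ τ : Fin n → ℕ) :
    bd (ord := ord) (A.star (Finsupp.single σ 1) (Finsupp.single τ 1)) (σ + τ) := by
  intro κ hκ
  have := mem_le_lexp (ord := ord) hκ
  rwa [(A.mono_mono σ τ).2] at this

-- h with bd σ, times X^τ
lemma bd_star_monoR {h : SPoly K n} {σ : Fin n → ℕ} (hb : bd (ord := ord) h σ)
    (τ : Fin n → ℕ) : bd (ord := ord) (A.star h (Finsupp.single τ 1)) (σ + τ) := by
  induction h using Finsupp.induction with
  | zero => rw [zero_star]; exact bd_zero _
  | single_add α c f hαf hc ih =>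
      have hα : ord.le α σ := by
        apply hb
        rw [Finsupp.mem_support_iff, Finsupp.add_apply, Finsupp.single_eq_same,
          Finsupp.notMem_support_iff.mp hαf, add_zero]
        exact hc
      have hbf : bd (ord := ord) f σ := by
        intro κ hκ
        apply hb
        have hne : κ ≠ α := fun he => hαf (he ▸ hκ)
        rw [Finsupp.mem_support_iff, Finsupp.add_apply, Finsupp.single_apply,
          if_neg (fun he => hne he.symm), zero_add]
        exact Finsupp.mem_support_iff.mp hκ
      rw [A.add_star]
      apply bd_add
      · rw [single_star A]
        exact bd_smul c (bd_of_le (bd_mono_mono A α τ) (leR A τ hα))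
      · exact ih hbf

lemma bd_mono_single (σ τ : Fin n → ℕ) (b : K) :
    bd (ord := ord) (A.star (Finsupp.single σ 1) (Finsupp.single τ b)) (σ + τ) := by
  rw [single_eq_scalar_star A τ b, ← A.star_assoc]
  exact bd_star_monoR A (bd_mono_scalar A σ b) τ

lemma bd_monoL {g : SPoly K n} {τ : Fin n → ℕ} (hb : bd (ord := ord) g τ)
    (σ : Fin n → ℕ) : bd (ord := ord) (A.star (Finsupp.single σ 1) g) (σ + τ) := by
  induction g using Finsupp.induction with
  | zero => rw [star_zero]; exact bd_zero _
  | single_add β b f hβf hbne ih =>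
      have hβ : ord.le β τ := by
        apply hb
        rw [Finsupp.mem_support_iff, Finsupp.add_apply, Finsupp.single_eq_same,
          Finsupp.notMem_support_iff.mp hβf, add_zero]
        exact hbne
      have hbf : bd (ord := ord) f τ := by
        intro κ hκ
        apply hb
        have hne : κ ≠ β := fun he => hβf (he ▸ hκ)
        rw [Finsupp.mem_support_iff, Finsupp.add_apply, Finsupp.single_apply,
          if_neg (fun he => hne he.symm), zero_add]
        exact Finsupp.mem_support_iff.mp hκ
      rw [A.star_add]
      apply bd_add
      · have h1 : ord.le (σ + β) (σ + τ) := by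
          rw [add_comm σ β, add_comm σ τ]; exact leR A σ hβ
        exact bd_of_le (bd_mono_single A σ β b) h1
      · exact ih hbf

lemma bd_star {f g : SPoly K n} {κ τ : Fin n → ℕ} (hf : bd (ord := ord) f κ)
    (hg : bd (ord := ord) g τ) : bd (ord := ord) (A.star f g) (κ + τ) := by
  induction f using Finsupp.induction with
  | zero => rw [zero_star]; exact bd_zero _
  | single_add α c f' hαf hc ih =>
      have hα : ord.le α κ := by
        apply hf
        rw [Finsupp.mem_support_iff, Finsupp.add_apply, Finsupp.single_eq_same,
          Finsupp.notMem_support_iff.mp hαf, add_zero]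
        exact hc
      have hbf : bd (ord := ord) f' κ := by
        intro σ hσ
        apply hf
        have hne : σ ≠ α := fun he => hαf (he ▸ hσ)
        rw [Finsupp.mem_support_iff, Finsupp.add_apply, Finsupp.single_apply,
          if_neg (fun he => hne he.symm), zero_add]
        exact Finsupp.mem_support_iff.mp hσ
      rw [A.add_star]
      apply bd_add
      · rw [single_star A]
        exact bd_smul c (bd_of_le (bd_monoL A hg α) (leR A τ hα))
      · exact ih hbf

lemma sbd_star_left {f g : SPoly K n} {κ τ : Fin n → ℕ} (hf : sbd (ord := ord) f κ)
    (hg : bd (ord := ord) g τ) : sbd (ord := ord) (A.star f g) (κ + τ) := by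
  induction f using Finsupp.induction with
  | zero => rw [zero_star]; intro σ hσ; simp at hσ
  | single_add α c f' hαf hc ih =>
      have hα : ord.lt α κ := by
        apply hf
        rw [Finsupp.mem_support_iff, Finsupp.add_apply, Finsupp.single_eq_same,
          Finsupp.notMem_support_iff.mp hαf, add_zero]
        exact hc
      have hbf : sbd (ord := ord) f' κ := by
        intro σ hσ
        apply hf
        have hne : σ ≠ α := fun he => hαf (he ▸ hσ)
        rw [Finsupp.mem_support_iff, Finsupp.add_apply, Finsupp.single_apply,
          if_neg (fun he => hne he.symm), zero_add]
        exact Finsupp.mem_support_iff.mp hσ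
      rw [A.add_star]
      apply sbd_add
      · intro σ hσ
        rw [single_star A] at hσ
        have h1 := bd_monoL A hg α σ (Finsupp.support_smul hσ)
        exact olt_of_le_of_lt h1 (A.add_compat _ _ _ hα)
      · exact ih hbf

lemma sbd_star_right {f g : SPoly K n} {κ τ : Fin n → ℕ} (hf : bd (ord := ord) f κ)
    (hg : sbd (ord := ord) g τ) : sbd (ord := ord) (A.star f g) (κ + τ) := by
  induction g using Finsupp.induction with
  | zero => rw [star_zero]; intro σ hσ; simp at hσ
  | single_add β b g' hβg hbne ih =>
      have hβ : ord.lt β τ := by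
        apply hg
        rw [Finsupp.mem_support_iff, Finsupp.add_apply, Finsupp.single_eq_same,
          Finsupp.notMem_support_iff.mp hβg, add_zero]
        exact hbne
      have hbg : sbd (ord := ord) g' τ := by
        intro σ hσ
        apply hg
        have hne : σ ≠ β := fun he => hβg (he ▸ hσ)
        rw [Finsupp.mem_support_iff, Finsupp.add_apply, Finsupp.single_apply,
          if_neg (fun he => hne he.symm), zero_add]
        exact Finsupp.mem_support_iff.mp hσ
      rw [A.star_add]
      apply sbd_add
      · intro σ hσ
        have h1 := bd_star A hf (bd_single (ord := ord) β b) σ hσ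
        exact olt_of_le_of_lt h1 (oltL A κ hβ)
      · exact ih hbg

lemma sbd_sub_single {h : SPoly K n} {ν : Fin n → ℕ} (hb : bd (ord := ord) h ν) :
    sbd (ord := ord) (h - Finsupp.single ν (h ν)) ν := by
  intro σ hσ
  have hval : (h - Finsupp.single ν (h ν)) σ ≠ 0 := Finsupp.mem_support_iff.mp hσ
  have hne : σ ≠ ν := by
    intro he; subst he
    rw [Finsupp.sub_apply, Finsupp.single_eq_same, sub_self] at hval
    exact hval rfl
  rw [Finsupp.sub_apply, Finsupp.single_apply, if_neg (fun he => hne he.symm),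
    sub_zero] at hval
  exact olt_of_le_ne (hb σ (Finsupp.mem_support_iff.mpr hval)) hne

lemma decomp (h : SPoly K n) (ν : Fin n → ℕ) :
    h = Finsupp.single ν (h ν) + (h - Finsupp.single ν (h ν)) := by
  abel


-- key coefficient extraction lemmas
lemma coeff_star_mono {h : SPoly K n} {μ : Fin n → ℕ} (hb : bd (ord := ord) h μ)
    (ν : Fin n → ℕ) :
    (A.star h (Finsupp.single ν 1)) (μ + ν)
      = h μ * (A.star (Finsupp.single μ 1) (Finsupp.single ν 1)) (μ + ν) := by
  conv_lhs => rw [decomp h μ]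
  rw [A.add_star, Finsupp.add_apply, single_star A, Finsupp.smul_apply, smul_eq_mul]
  have h0 : (A.star (h - Finsupp.single μ (h μ)) (Finsupp.single ν 1)) (μ + ν) = 0 :=
    sbd_coeff (sbd_star_left A (sbd_sub_single hb) (bd_single ν 1))
  rw [h0, add_zero]

lemma coeff_star_scalar {h : SPoly K n} {μ : Fin n → ℕ} (hb : bd (ord := ord) h μ)
    (r : K) :
    (A.star h (Finsupp.single 0 r)) μ
      = h μ * (A.star (Finsupp.single μ 1) (Finsupp.single 0 r)) μ := by
  conv_lhs => rw [decomp h μ]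
  rw [A.add_star, Finsupp.add_apply, single_star A, Finsupp.smul_apply, smul_eq_mul]
  have hs : sbd (ord := ord)
      (A.star (h - Finsupp.single μ (h μ)) (Finsupp.single 0 r)) μ := by
    have := sbd_star_left A (sbd_sub_single hb) (bd_single (0 : Fin n → ℕ) r)
    rwa [add_zero] at this
  rw [sbd_coeff hs, add_zero]

lemma coeff_mono_star {g : SPoly K n} {ν : Fin n → ℕ} (hb : bd (ord := ord) g ν)
    (μ : Fin n → ℕ) :
    (A.star (Finsupp.single μ 1) g) (μ + ν)
      = (A.star (Finsupp.single μ 1) (Finsupp.single 0 (g ν))) μ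
        * (A.star (Finsupp.single μ 1) (Finsupp.single ν 1)) (μ + ν) := by
  conv_lhs => rw [decomp g ν]
  rw [A.star_add, Finsupp.add_apply]
  have h1 : A.star (Finsupp.single μ 1) (Finsupp.single ν (g ν))
      = A.star (A.star (Finsupp.single μ 1) (Finsupp.single 0 (g ν)))
          (Finsupp.single ν 1) := by
    rw [single_eq_scalar_star A ν (g ν), ← A.star_assoc]
  rw [h1, coeff_star_mono A (bd_mono_scalar A μ (g ν)) ν]
  have h0 : (A.star (Finsupp.single μ 1) (g - Finsupp.single ν (g ν))) (μ + ν) = 0 :=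
    sbd_coeff (sbd_star_right A (bd_single μ 1) (sbd_sub_single hb))
  rw [h0, add_zero]

end SolvAux

open SolvAux in

/-- In a polynomial algebra of solvable type over a field, the maps `ρ_μ` and the
coefficients `r_{μν}` arising from the commutation relations
`x^μ ⋆ r = ρ_μ(r)·x^μ + …` and `x^μ ⋆ x^ν = r_{μν}·x^{μ+ν} + …` satisfy
`ρ_μ(ρ_ν(r))·r_{μν} = r_{μν}·ρ_{μ+ν}(r)` and
`ρ_μ(r_{νλ})·r_{μ,ν+λ} = r_{μν}·r_{μ+ν,λ}`; moreover each `ρ_μ` is a ring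
endomorphism. -/
theorem stmt12 {K : Type} [Field K] {n : ℕ} (ord : LinearOrder (Fin n → ℕ))
    (A : SolvMul K n ord)
    (ρ : (Fin n → ℕ) → K → K)
    (hρ : ∀ (μ : Fin n → ℕ) (r : K),
      ρ μ r = (A.star (Finsupp.single μ 1) (Finsupp.single 0 r)) μ)
    (rc : (Fin n → ℕ) → (Fin n → ℕ) → K)
    (hrc : ∀ μ ν : Fin n → ℕ,
      rc μ ν = (A.star (Finsupp.single μ 1) (Finsupp.single ν 1)) (μ + ν)) :
    (∀ (μ ν : Fin n → ℕ) (r : K), ρ μ (ρ ν r) * rc μ ν = rc μ ν * ρ (μ + ν) r) ∧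
    (∀ μ ν lam : Fin n → ℕ, ρ μ (rc ν lam) * rc μ (ν + lam) = rc μ ν * rc (μ + ν) lam) ∧
    (∀ μ : Fin n → ℕ, ρ μ 1 = 1 ∧
      ∀ r s : K, ρ μ (r + s) = ρ μ r + ρ μ s ∧ ρ μ (r * s) = ρ μ r * ρ μ s) := by
  refine ⟨?_, ?_, ?_⟩
  · intro μ ν r
    have hE : (A.star (A.star (Finsupp.single μ 1) (Finsupp.single ν 1))
        (Finsupp.single 0 r)) (μ + ν) = rc μ ν * ρ (μ + ν) r := by
      rw [coeff_star_scalar A (bd_mono_mono A μ ν) r, ← hrc, ← hρ]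
    have hF : (A.star (Finsupp.single μ 1)
        (A.star (Finsupp.single ν 1) (Finsupp.single 0 r))) (μ + ν)
        = ρ μ (ρ ν r) * rc μ ν := by
      rw [coeff_mono_star A (bd_mono_scalar A ν r) μ, ← hρ, ← hρ, ← hrc]
    rw [← hF, ← hE, A.star_assoc]
  · intro μ ν lam
    have hE : (A.star (A.star (Finsupp.single μ 1) (Finsupp.single ν 1))
        (Finsupp.single lam 1)) ((μ + ν) + lam) = rc μ ν * rc (μ + ν) lam := by
      rw [coeff_star_mono A (bd_mono_mono A μ ν) lam, ← hrc, ← hrc]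
    have hF : (A.star (Finsupp.single μ 1)
        (A.star (Finsupp.single ν 1) (Finsupp.single lam 1))) (μ + (ν + lam))
        = ρ μ (rc ν lam) * rc μ (ν + lam) := by
      rw [coeff_mono_star A (bd_mono_mono A ν lam) μ, ← hrc, ← hρ, ← hrc]
    rw [← hE, ← hF, A.star_assoc, add_assoc]
  · intro μ
    refine ⟨?_, fun r s => ⟨?_, ?_⟩⟩
    · rw [hρ, A.star_one, Finsupp.single_eq_same]
    · rw [hρ, hρ, hρ, Finsupp.single_add, A.star_add, Finsupp.add_apply]
    · have h1 : (Finsupp.single 0 (r * s) : SPoly K n)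
          = A.star (Finsupp.single 0 r) (Finsupp.single 0 s) := by
        rw [A.scalar_star, Finsupp.smul_single, smul_eq_mul]
      rw [hρ, h1, ← A.star_assoc,
        coeff_star_scalar A (bd_mono_scalar A μ r) s, ← hρ, ← hρ]
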